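/- If b < 0, α ∈ (π/2, π), and θ ∈ (-θ₀, π) with 0 < θ₀ < 2α - π, then f'(θ) > 0. -/

import Mathlib

open Real

theorem stmt_3 (a b c α θ₀ θ : ℝ)
    (hb : b < 0) (hc : c > 0) (ha : a < 0) (hac : a ^ 2 + c ^ 2 > 0)
    (hne : Real.sqrt (a ^ 2 + c ^ 2) ≠ |b|)
    (hα : α ∈ Set.Ioo (π / 2) π)
    (hsin : Real.sin α = c / Real.sqrt (a ^ 2 + c ^ 2))
    (hcos : Real.cos α = a / Real.sqrt (a ^ 2 + c ^ 2))
    (hθ₀ : 0 < θ₀ ∧ θ₀ < 2 * α - π)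
    (hθ : θ ∈ Set.Ioo (-θ₀) π)
    (f : ℝ → ℝ)
    (hf : ∀ x : ℝ, f x = Real.sqrt (a ^ 2 + b ^ 2 + c ^ 2 +
        2 * b * Real.sqrt (a ^ 2 + c ^ 2) * Real.sin (x / 2 + α))) :
    0 < deriv f θ := by
  have hfun : f = fun x => Real.sqrt (a ^ 2 + b ^ 2 + c ^ 2 +
      2 * b * Real.sqrt (a ^ 2 + c ^ 2) * Real.sin (x / 2 + α)) := funext hf
  subst hfun
  set s : ℝ := Real.sqrt (a ^ 2 + c ^ 2) with hs
  have hs0 : 0 < s := Real.sqrt_pos.mpr hac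
  have hs2 : s ^ 2 = a ^ 2 + c ^ 2 := Real.sq_sqrt hac.le
  set g : ℝ → ℝ := fun x => a ^ 2 + b ^ 2 + c ^ 2 + 2 * b * s * Real.sin (x / 2 + α)
    with hg
  -- g θ > 0
  have hsb : s + b ≠ 0 := by
    intro h
    apply hne
    rw [abs_of_neg hb]
    linarith
  have hgpos : 0 < g θ := by
    have h1 : Real.sin (θ / 2 + α) ≤ 1 := Real.sin_le_one _
    have h2 : 2 * b * s * Real.sin (θ / 2 + α) ≥ 2 * b * s * 1 := by
      apply mul_le_mul_of_nonpos_left h1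
      nlinarith
    have h3 : 0 < (s + b) ^ 2 := by positivity
    have : g θ ≥ a ^ 2 + b ^ 2 + c ^ 2 + 2 * b * s := by
      simp only [hg]; linarith
    nlinarith
  -- derivative of g
  have hder : HasDerivAt g (b * s * Real.cos (θ / 2 + α) * (1/2) * 2) θ := by
    have h1 : HasDerivAt (fun x : ℝ => x / 2 + α) (1 / 2) θ := by
      simpa using ((hasDerivAt_id θ).div_const 2).add_const α
    have h2 : HasDerivAt (fun x : ℝ => Real.sin (x / 2 + α))
        (Real.cos (θ / 2 + α) * (1 / 2)) θ := (Real.hasDerivAt_sin _).comp θ h1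
    have h3 := (h2.const_mul (2 * b * s)).const_add (a ^ 2 + b ^ 2 + c ^ 2)
    exact h3.congr_deriv (by ring)
  have hderf : HasDerivAt (fun x => Real.sqrt (g x))
      (b * s * Real.cos (θ / 2 + α) * (1/2) * 2 / (2 * Real.sqrt (g θ))) θ :=
    hder.sqrt (ne_of_gt hgpos)
  have hderiv : deriv (fun x => Real.sqrt (g x)) θ
      = b * s * Real.cos (θ / 2 + α) * (1/2) * 2 / (2 * Real.sqrt (g θ)) :=
    hderf.deriv
  have hcosneg : Real.cos (θ / 2 + α) < 0 := by
    obtain ⟨hα1, hα2⟩ := hα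
    obtain ⟨hθ1, hθ2⟩ := hθ
    apply Real.cos_neg_of_pi_div_two_lt_of_lt
    · linarith [hθ₀.2, hθ₀.1]
    · linarith
  have hnum : 0 < b * s * Real.cos (θ / 2 + α) * (1/2) * 2 := by
    have h := mul_pos_of_neg_of_neg (mul_neg_of_neg_of_pos hb hs0) hcosneg
    linarith
  show 0 < deriv (fun x => Real.sqrt (g x)) θ
  rw [hderiv]
  exact div_pos hnum (by positivity)
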